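/- Let G = S₃ with irreducible representations φ₁ (trivial), φ₂ (sign), φ₃ (2-dimensional), and y_i := det(Σ_{h∈G} φ_i(h)x_h). Then for any monomial y₁^{α₁}y₂^{α₂}y₃^{α₃} with α ∈ (ℤ_{≥0})³: D_{(123)}(y₁^{α₁}y₂^{α₂}y₃^{α₃}) = (α₁+α₂−α₃)·y₁^{α₁}y₂^{α₂}y₃^{α₃} and D_{(12)}(y₁^{α₁}y₂^{α₂}y₃^{α₃}) = (α₁−α₂)·y₁^{α₁}y₂^{α₂}y₃^{α₃}. -/
import Mathlib


open MvPolynomial Equiv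

/-- The Frobenius differential operator `D_g f = ∑_{h ∈ G} x_{g⁻¹ h} ∂f/∂x_h`. -/
noncomputable def Dop {G : Type*} [Group G] [Fintype G] [DecidableEq G] (g : G)
    (f : MvPolynomial G ℂ) : MvPolynomial G ℂ :=
  ∑ h : G, X (g⁻¹ * h) * pderiv h f

/-- The matrix `X = ∑_{h ∈ G} φ(h) x_h` with entries in the polynomial ring. -/
noncomputable def repMatrix {G : Type*} [Group G] [Fintype G] [DecidableEq G] {d : ℕ}
    (φ : G →* Matrix (Fin d) (Fin d) ℂ) : Matrix (Fin d) (Fin d) (MvPolynomial G ℂ) :=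
  ∑ h : G, (X h : MvPolynomial G ℂ) • (φ h).map C

section lemmas
variable {G : Type*} [Group G] [Fintype G] [DecidableEq G]

lemma Dop_mul (g : G) (f₁ f₂ : MvPolynomial G ℂ) :
    Dop g (f₁ * f₂) = Dop g f₁ * f₂ + f₁ * Dop g f₂ := by
  simp only [Dop, pderiv_mul, mul_add, Finset.sum_add_distrib, Finset.sum_mul, Finset.mul_sum]
  congr 1
  · exact Finset.sum_congr rfl fun h _ => by ring
  · exact Finset.sum_congr rfl fun h _ => by ring

lemma Dop_one (g : G) : Dop g (1 : MvPolynomial G ℂ) = 0 := by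
  simp [Dop, pderiv_one]

lemma Dop_pow (g : G) (f : MvPolynomial G ℂ) (c : ℂ)
    (h : Dop g f = C c * f) (n : ℕ) :
    Dop g (f ^ n) = C ((n : ℂ) * c) * f ^ n := by
  induction n with
  | zero => simp [Dop_one]
  | succ n ih =>
      rw [pow_succ, Dop_mul, ih, h]
      have : ((n + 1 : ℕ) : ℂ) * c = (n : ℂ) * c + c := by push_cast; ring
      rw [this, map_add]
      ring

lemma Dop_C_mul_X (g : G) (c : ℂ) (h : G) :
    Dop g (C c * X h : MvPolynomial G ℂ) = C c * X (g⁻¹ * h) := by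
  simp only [Dop, pderiv_C_mul, pderiv_X]
  rw [Finset.sum_eq_single h]
  · simp [mul_comm]
  · intro b _ hb; simp [Pi.single_eq_of_ne hb.symm, Pi.single_apply, hb.symm]
  · simp

lemma Dop_X' (g h : G) : Dop g (X h : MvPolynomial G ℂ) = X (g⁻¹ * h) := by
  have := Dop_C_mul_X g 1 h
  simpa using this

lemma Dop_sum {ι : Type*} (g : G) (s : Finset ι) (f : ι → MvPolynomial G ℂ) :
    Dop g (∑ i ∈ s, f i) = ∑ i ∈ s, Dop g (f i) := by
  simp only [Dop, map_sum, Finset.mul_sum]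
  rw [Finset.sum_comm]

end lemmas

section lemmas2
variable {G : Type*} [Group G] [Fintype G] [DecidableEq G]

lemma Dop_sub (g : G) (f₁ f₂ : MvPolynomial G ℂ) :
    Dop g (f₁ - f₂) = Dop g f₁ - Dop g f₂ := by
  simp [Dop, map_sub, mul_sub, Finset.sum_sub_distrib]

lemma Dop_y1 (g : G) :
    Dop g (∑ h : G, X h : MvPolynomial G ℂ) = C 1 * ∑ h : G, X h := by
  rw [Dop_sum, map_one, one_mul]
  simp only [Dop_X']
  exact Fintype.sum_equiv (Equiv.mulLeft g⁻¹) _ _ (fun h => by simp)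

lemma Dop_char (χ : G →* ℂ) (g : G) :
    Dop g (∑ h : G, C (χ h) * X h) = C (χ g) * ∑ h : G, C (χ h) * X h := by
  rw [Dop_sum, Finset.mul_sum]
  simp only [Dop_C_mul_X]
  refine Fintype.sum_equiv (Equiv.mulLeft g⁻¹) _ _ (fun h => ?_)
  simp [← mul_assoc, ← map_mul, mul_inv_cancel_left]

lemma repMatrix_apply {d : ℕ} (φ : G →* Matrix (Fin d) (Fin d) ℂ) (i j : Fin d) :
    repMatrix φ i j = ∑ h : G, C (φ h i j) * X h := by
  simp [repMatrix, Matrix.sum_apply, Matrix.smul_apply, Matrix.map_apply, smul_eq_mul, mul_comm]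

lemma Dop_repMatrix {d : ℕ} (φ : G →* Matrix (Fin d) (Fin d) ℂ) (g : G) (i j : Fin d) :
    Dop g (repMatrix φ i j) = ∑ l : Fin d, C (φ g i l) * repMatrix φ l j := by
  have h1 : Dop g (repMatrix φ i j) = ∑ k : G, C ((φ g * φ k) i j) * X k := by
    rw [repMatrix_apply, Dop_sum]
    simp only [Dop_C_mul_X]
    refine Fintype.sum_equiv (Equiv.mulLeft g⁻¹) _ _ (fun h => ?_)
    simp [← map_mul, mul_inv_cancel_left]
  rw [h1]
  simp only [Matrix.mul_apply, map_sum, Finset.sum_mul]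
  rw [Finset.sum_comm]
  refine Finset.sum_congr rfl fun l _ => ?_
  rw [repMatrix_apply, Finset.mul_sum]
  refine Finset.sum_congr rfl fun k _ => ?_
  rw [map_mul]; ring

lemma Dop_det2 (φ : G →* Matrix (Fin 2) (Fin 2) ℂ) (g : G) :
    Dop g (repMatrix φ).det = C ((φ g).trace) * (repMatrix φ).det := by
  have D := fun i j => Dop_repMatrix φ g i j
  simp only [Fin.sum_univ_two] at D
  rw [Matrix.det_fin_two, Matrix.trace_fin_two, Dop_sub, Dop_mul, Dop_mul,
    D 0 0, D 1 1, D 0 1, D 1 0, map_add]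
  ring

lemma Dop_triple (g : G) (f₁ f₂ f₃ : MvPolynomial G ℂ) (c₁ c₂ c₃ : ℂ) (a b c : ℕ)
    (h₁ : Dop g f₁ = C c₁ * f₁) (h₂ : Dop g f₂ = C c₂ * f₂) (h₃ : Dop g f₃ = C c₃ * f₃) :
    Dop g (f₁ ^ a * f₂ ^ b * f₃ ^ c) =
      C ((a : ℂ) * c₁ + (b : ℂ) * c₂ + (c : ℂ) * c₃) * (f₁ ^ a * f₂ ^ b * f₃ ^ c) := by
  rw [Dop_mul, Dop_mul, Dop_pow _ _ _ h₁, Dop_pow _ _ _ h₂, Dop_pow _ _ _ h₃,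
    map_add, map_add]
  ring

end lemmas2

noncomputable def sgnChar : Perm (Fin 3) →* ℂ :=
  (Int.castRingHom ℂ).toMonoidHom.comp ((Units.coeHom ℤ).comp Perm.sign)

lemma sgnChar_apply (h : Perm (Fin 3)) : sgnChar h = ((Perm.sign h : ℤ) : ℂ) := rfl


/-- For `G = S₃`, the actions of `D_{(123)}` and `D_{(12)}` on a monomial
`y₁^{α₁} y₂^{α₂} y₃^{α₃}` are by the scalars `α₁ + α₂ - α₃` and `α₁ - α₂`. -/
theorem Dop_monomial_S3
    (φ₃ : Perm (Fin 3) →* Matrix (Fin 2) (Fin 2) ℂ)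
    (hc : (φ₃ (swap 0 2 * swap 0 1)).trace = -1)
    (ht : (φ₃ (swap 0 1)).trace = 0)
    (y₁ y₂ y₃ : MvPolynomial (Perm (Fin 3)) ℂ)
    (hy₁ : y₁ = ∑ h : Perm (Fin 3), X h)
    (hy₂ : y₂ = ∑ h : Perm (Fin 3), C (((Perm.sign h : ℤ) : ℂ)) * X h)
    (hy₃ : y₃ = (repMatrix φ₃).det)
    (α₁ α₂ α₃ : ℕ) :
    Dop (swap 0 2 * swap 0 1) (y₁ ^ α₁ * y₂ ^ α₂ * y₃ ^ α₃) =
        C ((α₁ : ℂ) + α₂ - α₃) * (y₁ ^ α₁ * y₂ ^ α₂ * y₃ ^ α₃) ∧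
      Dop (swap 0 1) (y₁ ^ α₁ * y₂ ^ α₂ * y₃ ^ α₃) =
        C ((α₁ : ℂ) - α₂) * (y₁ ^ α₁ * y₂ ^ α₂ * y₃ ^ α₃) := by
  have hy₂' : y₂ = ∑ h : Perm (Fin 3), C (sgnChar h) * X h := by
    rw [hy₂]; rfl
  have hs1 : Perm.sign (swap 0 2 * swap 0 1 : Perm (Fin 3)) = 1 := by decide
  have hs2 : Perm.sign (swap 0 1 : Perm (Fin 3)) = -1 := by decide
  have hχ1 : sgnChar (swap 0 2 * swap 0 1) = 1 := by
    rw [sgnChar_apply, hs1]; norm_num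
  have hχ2 : sgnChar (swap 0 1) = -1 := by
    rw [sgnChar_apply, hs2]; norm_num
  constructor
  · have := Dop_triple (swap 0 2 * swap 0 1) y₁ y₂ y₃ 1 1 (-1) α₁ α₂ α₃
      (by rw [hy₁]; exact Dop_y1 _)
      (by rw [hy₂']; rw [← hχ1]; exact Dop_char sgnChar _)
      (by rw [hy₃, ← hc]; exact Dop_det2 φ₃ _)
    rw [this]; ring_nf
  · have := Dop_triple (swap 0 1) y₁ y₂ y₃ 1 (-1) 0 α₁ α₂ α₃
      (by rw [hy₁]; exact Dop_y1 _)
      (by rw [hy₂']; rw [← hχ2]; exact Dop_char sgnChar _)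
      (by rw [hy₃, ← ht]; exact Dop_det2 φ₃ _)
    rw [this]; ring_nf
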